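/- Assume in addition that σ_n = T almost surely for every n ∈ ℕ, and that for some p > 1 one has sup_{n ∈ ℕ} 𝔼[ sup_{t ∈ [0,T]} ‖X_n(t)‖^p ] < ∞. Then for every 1 ≤ q < p one has 𝔼[ sup_{t ∈ [0,T]} ‖X_n(t) − X_∞(t)‖^q ] → 0 as n → ∞ (i.e., X_n → X_∞ in L^q(Ω; C([0,T]; E))). -/

import Mathlib

open MeasureTheory Filter Set

open scoped ENNReal NNReal

namespace Stmt10Aux
open ENNReal


variable {E : Type*} [NormedAddCommGroup E]

lemma exists_max {T : ℝ} (hT : 0 ≤ T) {f : ℝ → E} (hf : ContinuousOn f (Icc 0 T)) :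
    ∃ t0 ∈ Icc (0:ℝ) T, ∀ t ∈ Icc (0:ℝ) T, ‖f t‖ ≤ ‖f t0‖ := by
  obtain ⟨t0, ht0, hmax⟩ := isCompact_Icc.exists_isMaxOn (nonempty_Icc.2 hT)
      (continuous_norm.comp_continuousOn hf)
  exact ⟨t0, ht0, fun t ht => hmax ht⟩

lemma sup_eq {T : ℝ} (hT : 0 ≤ T) {f : ℝ → E} {t0 : ℝ} (ht0 : t0 ∈ Icc (0:ℝ) T)
    (hmax : ∀ t ∈ Icc (0:ℝ) T, ‖f t‖ ≤ ‖f t0‖) :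
    (⨆ t : Icc (0:ℝ) T, ‖f (t:ℝ)‖) = ‖f t0‖ := by
  haveI : Nonempty (Icc (0:ℝ) T) := ⟨⟨0, le_refl _, hT⟩⟩
  refine le_antisymm (ciSup_le fun t => hmax (t:ℝ) t.2) ?_
  have hb : BddAbove (range fun t : Icc (0:ℝ) T => ‖f (t:ℝ)‖) := by
    refine ⟨‖f t0‖, ?_⟩
    rintro x ⟨t, rfl⟩; exact hmax (t:ℝ) t.2
  exact le_ciSup hb (⟨t0, ht0⟩ : Icc (0:ℝ) T)

lemma sup_enorm_eq {T : ℝ} (hT : 0 ≤ T) {v : ℕ → ℝ} (hv : ∀ k, v k ∈ Icc (0:ℝ) T)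
    (hvd : ∀ t ∈ Icc (0:ℝ) T, ∃ g : ℕ → ℝ, (∀ j, g j ∈ range v) ∧ Tendsto g atTop (nhds t))
    {f : ℝ → E} (hf : ContinuousOn f (Icc 0 T)) :
    (⨆ k, (‖f (v k)‖₊ : ℝ≥0∞)) = ENNReal.ofReal (⨆ t : Icc (0:ℝ) T, ‖f (t:ℝ)‖) := by
  obtain ⟨t0, ht0, hmax⟩ := exists_max hT hf
  rw [sup_eq hT ht0 hmax, ofReal_norm_eq_enorm]
  refine le_antisymm (iSup_le fun k => ?_) ?_
  · exact_mod_cast hmax _ (hv k)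
  · obtain ⟨g, hg, hgt⟩ := hvd t0 ht0
    have hgIcc : ∀ j, g j ∈ Icc (0:ℝ) T := fun j => by
      obtain ⟨k, hk⟩ := hg j; rw [← hk]; exact hv k
    have htend : Tendsto (fun j => (‖f (g j)‖₊ : ℝ≥0∞)) atTop (nhds (‖f t0‖₊ : ℝ≥0∞)) := by
      refine ENNReal.tendsto_coe.2 (Filter.Tendsto.nnnorm ?_)
      exact (hf t0 ht0).tendsto.comp
        (tendsto_nhdsWithin_iff.2 ⟨hgt, Filter.Eventually.of_forall hgIcc⟩)
    refine le_of_tendsto htend (Filter.Eventually.of_forall fun j => ?_)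
    obtain ⟨k, hk⟩ := hg j
    rw [← hk]
    exact le_iSup (fun k => (‖f (v k)‖₊ : ℝ≥0∞)) k

lemma norm_le_of_interior {T r : ℝ} (hT : 0 < T) {f : ℝ → E}
    (hf : ContinuousOn f (Icc 0 T)) (h : ∀ t ∈ Ioo (0:ℝ) T, ‖f t‖ ≤ r) :
    ∀ t ∈ Icc (0:ℝ) T, ‖f t‖ ≤ r := by
  intro t ht
  have htc : t ∈ closure (Ioo (0:ℝ) T) := by
    rw [closure_Ioo hT.ne]; exact ht
  rw [mem_closure_iff_seq_limit] at htc
  obtain ⟨g, hg, hgt⟩ := htc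
  have hlim : Tendsto (fun j => ‖f (g j)‖) atTop (nhds ‖f t‖) := by
    refine Filter.Tendsto.norm ?_
    exact (hf t ht).tendsto.comp (tendsto_nhdsWithin_iff.2
      ⟨hgt, Filter.Eventually.of_forall fun j => Ioo_subset_Icc_self (hg j)⟩)
  exact le_of_tendsto hlim (Filter.Eventually.of_forall fun j => h _ (hg j))

lemma key_inf {s T r : ℝ} (hs : s ∈ Ioc (0:ℝ) T) {g : ℝ → E}
    (hg : ContinuousOn g (Ico 0 s))
    (hlt : sInf ({t : ℝ | t ∈ Ioo 0 s ∧ r < ‖g t‖} ∪ {T}) < T) :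
    sInf ({t : ℝ | t ∈ Ioo 0 s ∧ r < ‖g t‖} ∪ {T}) ∈ Ico (0:ℝ) s ∧
      r ≤ ‖g (sInf ({t : ℝ | t ∈ Ioo 0 s ∧ r < ‖g t‖} ∪ {T}))‖ := by
  have hbdd : BddBelow ({t : ℝ | t ∈ Ioo 0 s ∧ r < ‖g t‖} ∪ {T}) := by
    refine ⟨0, fun x hx => ?_⟩
    rcases hx with hx | hx
    · exact hx.1.1.le
    · rw [mem_singleton_iff] at hx; rw [hx]; exact hs.1.le.trans hs.2
  have hSne : {t : ℝ | t ∈ Ioo 0 s ∧ r < ‖g t‖}.Nonempty := by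
    by_contra hSe
    rw [not_nonempty_iff_eq_empty] at hSe
    rw [hSe, empty_union, csInf_singleton] at hlt
    exact lt_irrefl _ hlt
  obtain ⟨s0, hs0⟩ := hSne
  set m := sInf ({t : ℝ | t ∈ Ioo 0 s ∧ r < ‖g t‖} ∪ {T}) with hm
  have hm_le : ∀ x ∈ {t : ℝ | t ∈ Ioo 0 s ∧ r < ‖g t‖}, m ≤ x :=
    fun x hx => csInf_le hbdd (Or.inl hx)
  have hm0 : 0 ≤ m := le_csInf ⟨s0, Or.inl hs0⟩ fun b hb => by
    rcases hb with hb | hb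
    · exact hb.1.1.le
    · rw [mem_singleton_iff] at hb; rw [hb]; exact hs.1.le.trans hs.2
  have hms : m < s := lt_of_le_of_lt (hm_le s0 hs0) hs0.1.2
  refine ⟨⟨hm0, hms⟩, ?_⟩
  have hseq : ∀ k : ℕ, ∃ t ∈ {t : ℝ | t ∈ Ioo 0 s ∧ r < ‖g t‖},
      m ≤ t ∧ t < m + 1 / (k + 1) := by
    intro k
    have h1 : (0:ℝ) < 1 / ((k:ℝ) + 1) := by positivity
    have hlt2 : sInf ({t : ℝ | t ∈ Ioo 0 s ∧ r < ‖g t‖} ∪ {T})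
        < min (m + 1 / ((k:ℝ) + 1)) T := by
      rw [← hm]; exact lt_min (by linarith) hlt
    obtain ⟨a, ha, halt⟩ := exists_lt_of_csInf_lt ⟨s0, Or.inl hs0⟩ hlt2
    have haS : a ∈ {t : ℝ | t ∈ Ioo 0 s ∧ r < ‖g t‖} := by
      rcases ha with ha | ha
      · exact ha
      · rw [mem_singleton_iff] at ha
        exfalso; rw [ha] at halt; exact absurd (halt.trans_le (min_le_right _ _)) (lt_irrefl T)
    exact ⟨a, haS, hm_le a haS, halt.trans_le (min_le_left _ _)⟩
  choose u hu hum huk using hseq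
  have hulim : Tendsto u atTop (nhds m) := by
    have h0 : Tendsto (fun k : ℕ => m + 1 / ((k:ℝ) + 1)) atTop (nhds (m + 0)) :=
      tendsto_const_nhds.add tendsto_one_div_add_atTop_nhds_zero_nat
    rw [add_zero] at h0
    exact tendsto_of_tendsto_of_tendsto_of_le_of_le tendsto_const_nhds h0
      hum (fun k => (huk k).le)
  have hval : Tendsto (fun k => ‖g (u k)‖) atTop (nhds ‖g m‖) := by
    refine Filter.Tendsto.norm ?_
    refine (hg m ⟨hm0, hms⟩).tendsto.comp (tendsto_nhdsWithin_iff.2 ⟨hulim, ?_⟩)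
    exact Filter.Eventually.of_forall fun k => ⟨(hu k).1.1.le, (hu k).1.2⟩
  exact ge_of_tendsto hval (Filter.Eventually.of_forall fun k => (hu k).2.le)

lemma inf_eq_T {s T r : ℝ} {g : ℝ → E}
    (h : ∀ t ∈ Ioo (0:ℝ) s, ¬ (r < ‖g t‖)) :
    sInf ({t : ℝ | t ∈ Ioo 0 s ∧ r < ‖g t‖} ∪ {T}) = T := by
  have he : {t : ℝ | t ∈ Ioo 0 s ∧ r < ‖g t‖} = ∅ := by
    ext t; simp only [mem_setOf_eq, mem_empty_iff_false, iff_false, not_and]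
    exact h t
  rw [he, empty_union, csInf_singleton]

lemma inf_le_T {s T r : ℝ} (hT : 0 ≤ T) (hs : s ≤ T) {g : ℝ → E} :
    sInf ({t : ℝ | t ∈ Ioo 0 s ∧ r < ‖g t‖} ∪ {T}) ≤ T := by
  refine csInf_le ⟨0, fun x hx => ?_⟩ (Or.inr rfl)
  rcases hx with hx | hx
  · exact hx.1.1.le
  · rw [mem_singleton_iff] at hx; rw [hx]; exact hT



lemma inf_le_mem {s T r : ℝ} (hs : s ∈ Ioc (0:ℝ) T) {g : ℝ → E} {t : ℝ}
    (ht : t ∈ Ioo 0 s ∧ r < ‖g t‖) :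
    sInf ({t : ℝ | t ∈ Ioo 0 s ∧ r < ‖g t‖} ∪ {T}) ≤ t := by
  refine csInf_le ⟨0, fun x hx => ?_⟩ (Or.inl ht)
  rcases hx with hx | hx
  · exact hx.1.1.le
  · rw [mem_singleton_iff] at hx; rw [hx]; exact hs.1.le.trans hs.2



lemma measurable_rpow_const {α : Type*} [MeasurableSpace α] {A : α → ℝ≥0∞}
    (hA : Measurable A) (q : ℝ) : Measurable fun x => A x ^ q := by
  have h : Measurable (fun y : ℝ≥0∞ => y ^ q) := by fun_prop
  exact h.comp hA

lemma div_rpow_small {D ε : ℝ≥0∞} (hD : D ≠ ⊤) (hε : 0 < ε) {s : ℝ} (hs : 0 < s) :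
    ∃ R : ℝ, 1 ≤ R ∧ ∀ r : ℝ, R ≤ r → D / (ENNReal.ofReal r) ^ s ≤ ε := by
  rcases eq_or_ne ε ⊤ with hεt | hεt
  · exact ⟨1, le_refl 1, fun r _ => by rw [hεt]; exact le_top⟩
  set x : ℝ := (D / ε).toReal + 1 with hx
  have hDε : D / ε ≠ ⊤ := (ENNReal.div_lt_top hD hε.ne').ne
  have hx0 : 0 < x := by positivity
  refine ⟨max 1 (x ^ (1 / s)), le_max_left _ _, fun r hr => ?_⟩
  have hxr : x ^ (1/s) ≤ r := le_trans (le_max_right _ _) hr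
  have h1 : (ENNReal.ofReal (x ^ (1/s))) ^ s ≤ (ENNReal.ofReal r) ^ s :=
    ENNReal.rpow_le_rpow (ENNReal.ofReal_le_ofReal hxr) hs.le
  have h2 : (ENNReal.ofReal (x ^ (1/s))) ^ s = ENNReal.ofReal x := by
    rw [ENNReal.ofReal_rpow_of_nonneg (Real.rpow_nonneg hx0.le _) hs.le,
      ← Real.rpow_mul hx0.le, one_div, inv_mul_cancel₀ hs.ne', Real.rpow_one]
  have h3 : D / ε ≤ ENNReal.ofReal x := by
    calc D / ε = ENNReal.ofReal (D / ε).toReal := (ENNReal.ofReal_toReal hDε).symm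
    _ ≤ ENNReal.ofReal x := ENNReal.ofReal_le_ofReal (by rw [hx]; linarith)
  have h4 : ENNReal.ofReal x ≤ (ENNReal.ofReal r) ^ s := h2 ▸ h1
  have hx_ne0 : ENNReal.ofReal x ≠ 0 := by
    simp only [ne_eq, ENNReal.ofReal_eq_zero, not_le]; exact hx0
  have hden_ne0 : (ENNReal.ofReal r) ^ s ≠ 0 := fun h0 =>
    hx_ne0 (le_antisymm (h0 ▸ h4) (zero_le))
  rcases eq_or_ne ((ENNReal.ofReal r) ^ s) ⊤ with hdt | hdt
  · rw [hdt, ENNReal.div_top]; exact zero_le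
  rw [ENNReal.div_le_iff hden_ne0 hdt]
  calc D = ε * (D / ε) := (ENNReal.mul_div_cancel hε.ne' hεt).symm
  _ ≤ ε * (ENNReal.ofReal r) ^ s := mul_le_mul_right (h3.trans h4) ε

lemma rpow_add_le (a b : ℝ≥0∞) {q : ℝ} (hq : 0 ≤ q) :
    (a + b) ^ q ≤ (2:ℝ≥0∞) ^ q * (a ^ q + b ^ q) := by
  have h1 : a + b ≤ 2 * (a ⊔ b) := by
    rw [two_mul]; exact add_le_add le_sup_left le_sup_right
  calc (a + b) ^ q ≤ (2 * (a ⊔ b)) ^ q := ENNReal.rpow_le_rpow h1 hq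
  _ = (2:ℝ≥0∞) ^ q * (a ⊔ b) ^ q := ENNReal.mul_rpow_of_nonneg _ _ hq
  _ ≤ (2:ℝ≥0∞) ^ q * (a ^ q + b ^ q) := by
      refine mul_le_mul_right ?_ _
      rcases le_total a b with h | h
      · rw [sup_eq_right.2 h]; exact le_add_self
      · rw [sup_eq_left.2 h]; exact self_le_add_right _ _

lemma tail_rpow {α : Type*} [MeasurableSpace α] (μ : Measure α) {A : α → ℝ≥0∞}
    (hA : Measurable A) {L : ℝ≥0∞} (hL0 : L ≠ 0) (hLt : L ≠ ⊤) {q p : ℝ}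
    (hq : 0 < q) (hqp : q ≤ p) :
    ∫⁻ x in {x | L ≤ A x}, A x ^ q ∂μ ≤ L ^ (q - p) * ∫⁻ x, A x ^ p ∂μ := by
  have hp : 0 < p := lt_of_lt_of_le hq hqp
  have hLqp : L ^ (q - p) ≠ 0 := by
    rw [ne_eq, ENNReal.rpow_eq_zero_iff]
    push_neg
    exact ⟨fun h => absurd h hL0, fun h => absurd h hLt⟩
  have hstep : ∀ x, L ≤ A x → A x ^ q ≤ L ^ (q - p) * A x ^ p := by
    intro x hx
    rcases eq_or_ne (A x) ⊤ with ht | ht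
    · rw [ht, ENNReal.top_rpow_of_pos hq, ENNReal.top_rpow_of_pos hp,
        ENNReal.mul_top hLqp]
    have h0 : A x ≠ 0 := fun h => hL0 (le_antisymm (h ▸ hx) (zero_le))
    have hsplit : A x ^ q = A x ^ p * A x ^ (q - p) := by
      rw [← ENNReal.rpow_add p (q - p) h0 ht]; ring_nf
    rw [hsplit, mul_comm]
    refine mul_le_mul_left ?_ _
    have : q - p = -(p - q) := by ring
    rw [this, ENNReal.rpow_neg, ENNReal.rpow_neg]
    exact ENNReal.inv_le_inv.2 (ENNReal.rpow_le_rpow hx (by linarith))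
  calc ∫⁻ x in {x | L ≤ A x}, A x ^ q ∂μ
      ≤ ∫⁻ x in {x | L ≤ A x}, L ^ (q - p) * A x ^ p ∂μ :=
        setLIntegral_mono' (measurableSet_le measurable_const hA) hstep
  _ = L ^ (q - p) * ∫⁻ x in {x | L ≤ A x}, A x ^ p ∂μ :=
        lintegral_const_mul _ (measurable_rpow_const hA p)
  _ ≤ L ^ (q - p) * ∫⁻ x, A x ^ p ∂μ :=
        mul_le_mul_right (setLIntegral_le_lintegral _ _) _

lemma split_tail {α : Type*} [MeasurableSpace α] (μ : Measure α) {B : α → ℝ≥0∞}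
    (hB : Measurable B) {S : Set α} (hS : MeasurableSet S) (K : ℝ≥0∞) {q : ℝ}
    (hq : 0 ≤ q) :
    ∫⁻ x in S, B x ^ q ∂μ ≤ K ^ q * μ S + ∫⁻ x in {x | K ≤ B x}, B x ^ q ∂μ := by
  have hsub : S ⊆ (S ∩ {x | B x < K}) ∪ {x | K ≤ B x} := by
    intro x hx
    rcases lt_or_ge (B x) K with h | h
    · exact Or.inl ⟨hx, h⟩
    · exact Or.inr h
  calc ∫⁻ x in S, B x ^ q ∂μ
      ≤ ∫⁻ x in (S ∩ {x | B x < K}) ∪ {x | K ≤ B x}, B x ^ q ∂μ :=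
        lintegral_mono_set hsub
  _ ≤ (∫⁻ x in S ∩ {x | B x < K}, B x ^ q ∂μ) + ∫⁻ x in {x | K ≤ B x}, B x ^ q ∂μ :=
        lintegral_union_le _ _ _
  _ ≤ K ^ q * μ S + ∫⁻ x in {x | K ≤ B x}, B x ^ q ∂μ := by
        refine add_le_add_left ?_ _
        calc ∫⁻ x in S ∩ {x | B x < K}, B x ^ q ∂μ
            ≤ ∫⁻ _ in S ∩ {x | B x < K}, K ^ q ∂μ := by
              refine setLIntegral_mono' (hS.inter (measurableSet_lt hB measurable_const))
                fun x hx => ENNReal.rpow_le_rpow hx.2.le hq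
        _ = K ^ q * μ (S ∩ {x | B x < K}) := setLIntegral_const _ _
        _ ≤ K ^ q * μ S := mul_le_mul_right (measure_mono inter_subset_left) _

lemma geom_ne_top {C : ℝ≥0∞} (hC : C ≠ ⊤) {q p : ℝ} (hq : 0 < q) (hqp : q < p) :
    (∑' k : ℕ, (ENNReal.ofReal ((2:ℝ) ^ (k + 3))) ^ q *
      (C / (ENNReal.ofReal ((2:ℝ) ^ k)) ^ p)) ≠ ⊤ := by
  have h2 : ((2:ℝ≥0∞)) ≠ 0 := by norm_num
  have h2t : ((2:ℝ≥0∞)) ≠ ⊤ := by norm_num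
  have hterm : ∀ k : ℕ, (ENNReal.ofReal ((2:ℝ) ^ (k + 3))) ^ q *
      (C / (ENNReal.ofReal ((2:ℝ) ^ k)) ^ p)
      = (C * (2:ℝ≥0∞) ^ (3 * q)) * ((2:ℝ≥0∞) ^ (q - p)) ^ k := by
    intro k
    have e1 : ENNReal.ofReal ((2:ℝ) ^ (k + 3)) = (2:ℝ≥0∞) ^ (((k:ℝ) + 3)) := by
      rw [ENNReal.ofReal_pow (by norm_num : (0:ℝ) ≤ 2), ENNReal.ofReal_ofNat,
        ← ENNReal.rpow_natCast]
      push_cast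
      ring_nf
    have e2 : ENNReal.ofReal ((2:ℝ) ^ k) = (2:ℝ≥0∞) ^ ((k:ℝ)) := by
      rw [ENNReal.ofReal_pow (by norm_num : (0:ℝ) ≤ 2), ENNReal.ofReal_ofNat,
        ← ENNReal.rpow_natCast]
    rw [e1, e2, ← ENNReal.rpow_mul, ← ENNReal.rpow_mul,
      ENNReal.div_eq_inv_mul, ← ENNReal.rpow_neg,
      ← ENNReal.rpow_natCast ((2:ℝ≥0∞) ^ (q - p)) k, ← ENNReal.rpow_mul]
    have collect : ∀ a b : ℝ, (2:ℝ≥0∞) ^ a * ((2:ℝ≥0∞) ^ b * C) = C * (2:ℝ≥0∞) ^ (a + b) := by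
      intro a b; rw [ENNReal.rpow_add _ _ h2 h2t]; ring
    have collect2 : C * (2:ℝ≥0∞) ^ (3 * q) * (2:ℝ≥0∞) ^ ((q - p) * (k:ℝ))
        = C * (2:ℝ≥0∞) ^ (3 * q + (q - p) * (k:ℝ)) := by
      rw [ENNReal.rpow_add _ _ h2 h2t]; ring
    rw [collect, collect2]
    congr 1
    push_cast
    ring
  rw [tsum_congr hterm, ENNReal.tsum_mul_left]
  have hw : ((2:ℝ≥0∞)) ^ (q - p) < 1 :=
    ENNReal.rpow_lt_one_of_one_lt_of_neg (by norm_num) (by linarith)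
  rw [ENNReal.tsum_geometric]
  refine ENNReal.mul_ne_top (ENNReal.mul_ne_top hC ?_) ?_
  · exact ENNReal.rpow_ne_top_of_nonneg (by positivity) h2t
  · rw [← lt_top_iff_ne_top, ENNReal.inv_lt_top, tsub_pos_iff_lt]
    exact hw

lemma layer_bound {b : ℝ≥0∞} (hb : b ≠ ⊤) {q : ℝ} (hq : 0 ≤ q) :
    b ^ q ≤ (ENNReal.ofReal ((2:ℝ) ^ 2)) ^ q
      + ∑' k : ℕ, (if ENNReal.ofReal ((2:ℝ) ^ (k + 2)) ≤ b
          then (ENNReal.ofReal ((2:ℝ) ^ (k + 3))) ^ q else 0) := by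
  rcases le_or_gt b (ENNReal.ofReal ((2:ℝ) ^ 2)) with hb4 | hb4
  · exact le_trans (ENNReal.rpow_le_rpow hb4 hq) le_self_add
  · have hex : ∃ m : ℕ, b < ENNReal.ofReal ((2:ℝ) ^ (m + 3)) := by
      obtain ⟨m, hm⟩ := pow_unbounded_of_one_lt b.toReal (by norm_num : (1:ℝ) < 2)
      refine ⟨m, ?_⟩
      rw [ENNReal.lt_ofReal_iff_toReal_lt hb]
      calc b.toReal < 2 ^ m := hm
      _ ≤ 2 ^ (m + 3) := by
          exact pow_le_pow_right₀ (by norm_num) (by omega)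
    set k := Nat.find hex with hk
    have h1 : b < ENNReal.ofReal ((2:ℝ) ^ (k + 3)) := Nat.find_spec hex
    have h2 : ENNReal.ofReal ((2:ℝ) ^ (k + 2)) ≤ b := by
      rcases Nat.eq_zero_or_pos k with hk0 | hk0
      · rw [hk0]; exact hb4.le
      · have := Nat.find_min hex (m := k - 1) (by omega)
        rw [not_lt] at this
        have hke : k - 1 + 3 = k + 2 := by omega
        rwa [hke] at this
    calc b ^ q ≤ (ENNReal.ofReal ((2:ℝ) ^ (k + 3))) ^ q := ENNReal.rpow_le_rpow h1.le hq
    _ = (if ENNReal.ofReal ((2:ℝ) ^ (k + 2)) ≤ b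
          then (ENNReal.ofReal ((2:ℝ) ^ (k + 3))) ^ q else 0) := by rw [if_pos h2]
    _ ≤ ∑' j : ℕ, (if ENNReal.ofReal ((2:ℝ) ^ (j + 2)) ≤ b
          then (ENNReal.ofReal ((2:ℝ) ^ (j + 3))) ^ q else 0) := ENNReal.le_tsum k
    _ ≤ _ := le_add_self


end Stmt10Aux

theorem stmt_10
    {Ω : Type*} [MeasurableSpace Ω] (P : Measure Ω) [IsProbabilityMeasure P]
    {E : Type*} [NormedAddCommGroup E] [NormedSpace ℝ E] [CompleteSpace E]
    [MeasurableSpace E] [BorelSpace E]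
    (T : ℝ) (hT : 0 < T)
    -- the explosion times σ_n (n ∈ ℕ) and σ_∞
    (σ : ℕ → Ω → ℝ) (σi : Ω → ℝ)
    (hσmeas : ∀ n, Measurable (σ n)) (hσimeas : Measurable σi)
    (hσmem : ∀ n ω, σ n ω ∈ Set.Ioc 0 T) (hσimem : ∀ ω, σi ω ∈ Set.Ioc 0 T)
    -- the processes X_n (n ∈ ℕ) and X_∞, jointly measurable
    (X : ℕ → ℝ → Ω → E) (Xi : ℝ → Ω → E)
    (hXmeas : ∀ n, Measurable fun p : ℝ × Ω => X n p.1 p.2)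
    (hXimeas : Measurable fun p : ℝ × Ω => Xi p.1 p.2)
    -- path continuity on [0, σ_n(ω)), and on [0,T] if σ_n(ω) = T
    (hXcont : ∀ n ω, ContinuousOn (fun t => X n t ω) (Set.Ico 0 (σ n ω)))
    (hXcontT : ∀ n ω, σ n ω = T → ContinuousOn (fun t => X n t ω) (Set.Icc 0 T))
    (hXicont : ∀ ω, ContinuousOn (fun t => Xi t ω) (Set.Ico 0 (σi ω)))
    (hXicontT : ∀ ω, σi ω = T → ContinuousOn (fun t => Xi t ω) (Set.Icc 0 T))
    -- σ_n is an explosion time: on {σ_n < T}, limsup_{t ↑ σ_n} ‖X_n(t)‖ = ∞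
    (hexpl : ∀ n ω, σ n ω < T →
      ∀ M : ℝ, ∃ᶠ t in nhdsWithin (σ n ω) (Set.Iio (σ n ω)), M < ‖X n t ω‖)
    (hexpli : ∀ ω, σi ω < T →
      ∀ M : ℝ, ∃ᶠ t in nhdsWithin (σi ω) (Set.Iio (σi ω)), M < ‖Xi t ω‖)
    -- the stopping times ρ_n^{(r)} = inf { t ∈ (0, σ_n) : ‖X_n(t)‖ > r }, inf ∅ := T
    (ρ : ℕ → ℝ → Ω → ℝ) (ρi : ℝ → Ω → ℝ)
    (hρ : ∀ n r ω, ρ n r ω = sInf ({t : ℝ | t ∈ Set.Ioo 0 (σ n ω) ∧ r < ‖X n t ω‖} ∪ {T}))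
    (hρi : ∀ r ω, ρi r ω = sInf ({t : ℝ | t ∈ Set.Ioo 0 (σi ω) ∧ r < ‖Xi t ω‖} ∪ {T}))
    -- the globally defined processes X_n^{(r)} (denoted Y n r) and X_∞^{(r)} (denoted Yi r)
    (Y : ℕ → ℝ → ℝ → Ω → E) (Yi : ℝ → ℝ → Ω → E)
    (hYmeas : ∀ n r, Measurable fun p : ℝ × Ω => Y n r p.1 p.2)
    (hYimeas : ∀ r, Measurable fun p : ℝ × Ω => Yi r p.1 p.2)
    (hYcont : ∀ n r ω, Continuous fun t => Y n r t ω)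
    (hYicont : ∀ r ω, Continuous fun t => Yi r t ω)
    -- assumption (a)
    (ha : ∀ n r, 0 < r → ∀ᵐ ω ∂P, ∀ t ∈ Set.Icc 0 (ρ n r ω), Y n r t ω = X n t ω)
    (hai : ∀ r, 0 < r → ∀ᵐ ω ∂P, ∀ t ∈ Set.Icc 0 (ρi r ω), Yi r t ω = Xi t ω)
    -- assumption (b): X_n^{(r)} → X_∞^{(r)} in L⁰(Ω; C([0,T]; E))
    (hb : ∀ r, 0 < r → TendstoInMeasure P
      (fun n ω => ⨆ t : Set.Icc (0:ℝ) T, ‖Y n r (t : ℝ) ω - Yi r (t : ℝ) ω‖)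
      atTop (fun _ => (0 : ℝ)))
    -- additionally: σ_n = T almost surely for all n ∈ ℕ
    (hσT : ∀ n, ∀ᵐ ω ∂P, σ n ω = T)
    -- and sup_n 𝔼[ sup_t ‖X_n(t)‖^p ] < ∞ for some p > 1
    (p : ℝ) (hp : 1 < p) (C : ENNReal) (hC : C < ⊤)
    (hbdd : ∀ n : ℕ,
      ∫⁻ ω, ENNReal.ofReal ((⨆ t : Set.Icc (0:ℝ) T, ‖X n (t : ℝ) ω‖) ^ p) ∂P ≤ C) :
    ∀ q : ℝ, 1 ≤ q → q < p →
      Tendsto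
        (fun n => ∫⁻ ω, ENNReal.ofReal
          ((⨆ t : Set.Icc (0:ℝ) T, ‖X n (t : ℝ) ω - Xi (t : ℝ) ω‖) ^ q) ∂P)
        atTop (nhds 0) := by
  intro q hq1 hqp
  have hq0 : (0:ℝ) < q := lt_of_lt_of_le one_pos hq1
  have hp0 : (0:ℝ) < p := lt_trans hq0 hqp
  have hpq0 : (0:ℝ) < p - q := by linarith
  -- a dense sequence in [0,T]
  haveI hne : Nonempty (Icc (0:ℝ) T) := ⟨⟨0, le_refl 0, hT.le⟩⟩
  set v : ℕ → ℝ := fun k => ((TopologicalSpace.denseSeq (Icc (0:ℝ) T) k : Icc (0:ℝ) T) : ℝ)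
    with hv
  have hvmem : ∀ k, v k ∈ Icc (0:ℝ) T := fun k => (TopologicalSpace.denseSeq (Icc (0:ℝ) T) k).2
  have hvd : ∀ t ∈ Icc (0:ℝ) T, ∃ g : ℕ → ℝ, (∀ j, g j ∈ range v) ∧
      Tendsto g atTop (nhds t) := by
    intro t ht
    have hcl : (⟨t, ht⟩ : Icc (0:ℝ) T) ∈
        closure (range (TopologicalSpace.denseSeq (Icc (0:ℝ) T))) :=
      TopologicalSpace.denseRange_denseSeq (Icc (0:ℝ) T) _
    rw [mem_closure_iff_seq_limit] at hcl
    obtain ⟨g, hg, hgt⟩ := hcl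
    refine ⟨fun j => ((g j : Icc (0:ℝ) T) : ℝ), fun j => ?_, ?_⟩
    · obtain ⟨k, hk⟩ := hg j
      exact ⟨k, by rw [hv]; exact congrArg _ hk⟩
    · exact (continuous_subtype_val.tendsto _).comp hgt
  -- measurable versions of the relevant suprema
  set A : ℕ → Ω → ℝ≥0∞ := fun n ω => ⨆ k, (‖X n (v k) ω‖₊ : ℝ≥0∞) with hA
  set B : Ω → ℝ≥0∞ := fun ω => ⨆ k, (‖Xi (v k) ω‖₊ : ℝ≥0∞) with hB
  set W : ℕ → Ω → ℝ≥0∞ := fun n ω => ⨆ k, (‖X n (v k) ω - Xi (v k) ω‖₊ : ℝ≥0∞) with hW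
  have hXsec : ∀ (n : ℕ) (c : ℝ), Measurable fun ω => X n c ω :=
    fun n c => (hXmeas n).comp measurable_prodMk_left
  have hXisec : ∀ c : ℝ, Measurable fun ω => Xi c ω :=
    fun c => hXimeas.comp measurable_prodMk_left
  have hAmeas : ∀ n, Measurable (A n) :=
    fun n => Measurable.iSup fun k => (hXsec n (v k)).enorm
  have hBmeas : Measurable B := Measurable.iSup fun k => (hXisec (v k)).enorm
  have hWle : ∀ n ω, W n ω ≤ A n ω + B ω := by
    intro n ω
    rw [hW, hA, hB]
    refine iSup_le fun k => ?_
    calc (‖X n (v k) ω - Xi (v k) ω‖₊ : ℝ≥0∞)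
        ≤ (‖X n (v k) ω‖₊ : ℝ≥0∞) + (‖Xi (v k) ω‖₊ : ℝ≥0∞) := by
          exact_mod_cast nnnorm_sub_le _ _
    _ ≤ (⨆ j, (‖X n (v j) ω‖₊ : ℝ≥0∞)) + ⨆ j, (‖Xi (v j) ω‖₊ : ℝ≥0∞) :=
          add_le_add (le_iSup (fun j => (‖X n (v j) ω‖₊ : ℝ≥0∞)) k)
            (le_iSup (fun j => (‖Xi (v j) ω‖₊ : ℝ≥0∞)) k)
  -- A n equals (a.e.) the sup over all of [0,T]
  have hAeq : ∀ n, ∀ᵐ ω ∂P, A n ω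
      = ENNReal.ofReal (⨆ t : Icc (0:ℝ) T, ‖X n (t:ℝ) ω‖) := fun n =>
    (hσT n).mono fun ω hσω => Stmt10Aux.sup_enorm_eq hT.le hvmem hvd (hXcontT n ω hσω)
  -- uniform p-th moment bound for A n
  have hAint : ∀ n, ∫⁻ ω, A n ω ^ p ∂P ≤ C := by
    intro n
    calc ∫⁻ ω, A n ω ^ p ∂P
        = ∫⁻ ω, ENNReal.ofReal ((⨆ t : Icc (0:ℝ) T, ‖X n (t:ℝ) ω‖) ^ p) ∂P := by
          refine lintegral_congr_ae ((hAeq n).mono fun ω h => ?_)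
          dsimp only
          rw [h, ENNReal.ofReal_rpow_of_nonneg (Real.iSup_nonneg fun t => norm_nonneg _) hp0.le]
    _ ≤ C := hbdd n
  -- Markov inequality for A n
  have hmarkov : ∀ (n : ℕ) (L : ℝ≥0∞), L ≠ 0 → L ≠ ⊤ →
      P {ω | L ≤ A n ω} ≤ C / L ^ p := by
    intro n L hL0 hLt
    have hLp0 : L ^ p ≠ 0 := by
      rw [ne_eq, ENNReal.rpow_eq_zero_iff]; push_neg
      exact ⟨fun h => absurd h hL0, fun h => absurd h hLt⟩
    have hLpt : L ^ p ≠ ⊤ := ENNReal.rpow_ne_top_of_nonneg hp0.le hLt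
    have h1 : L ^ p * P {ω | L ^ p ≤ A n ω ^ p} ≤ ∫⁻ ω, A n ω ^ p ∂P :=
      mul_meas_ge_le_lintegral₀ (Stmt10Aux.measurable_rpow_const (hAmeas n) p).aemeasurable _
    have hset : {ω | L ^ p ≤ A n ω ^ p} = {ω | L ≤ A n ω} := by
      ext ω; simp only [mem_setOf_eq]
      exact ENNReal.rpow_le_rpow_iff hp0
    rw [hset] at h1
    rw [ENNReal.le_div_iff_mul_le (Or.inl hLp0) (Or.inl hLpt)]
    calc P {ω | L ≤ A n ω} * L ^ p = L ^ p * P {ω | L ≤ A n ω} := mul_comm _ _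
    _ ≤ ∫⁻ ω, A n ω ^ p ∂P := h1
    _ ≤ C := hAint n
  -- key consequence of (a) together with smallness of A n
  have hkeyn : ∀ (n : ℕ) (r : ℝ), 0 < r → ∀ᵐ ω ∂P,
      A n ω < ENNReal.ofReal r →
        (∀ t ∈ Icc (0:ℝ) T, Y n r t ω = X n t ω) ∧
          ∀ t ∈ Icc (0:ℝ) T, ‖X n t ω‖ < r := by
    intro n r hr
    filter_upwards [ha n r hr, hσT n, hAeq n] with ω haω hσω hAeqω
    intro hAlt
    have hcont := hXcontT n ω hσω
    have hsup_lt : (⨆ t : Icc (0:ℝ) T, ‖X n (t:ℝ) ω‖) < r := by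
      rw [hAeqω] at hAlt
      exact (ENNReal.ofReal_lt_ofReal_iff hr).1 hAlt
    have hbound : ∀ t ∈ Icc (0:ℝ) T, ‖X n t ω‖ < r := by
      intro t ht
      obtain ⟨t0, ht0, hmax⟩ := Stmt10Aux.exists_max hT.le hcont
      have hsupeq := Stmt10Aux.sup_eq hT.le ht0 hmax
      calc ‖X n t ω‖ ≤ ‖X n t0 ω‖ := hmax t ht
      _ = ⨆ t : Icc (0:ℝ) T, ‖X n (t:ℝ) ω‖ := hsupeq.symm
      _ < r := hsup_lt
    have hρT : ρ n r ω = T := by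
      rw [hρ n r ω, hσω]
      exact Stmt10Aux.inf_eq_T fun t ht =>
        not_lt.2 (hbound t (Ioo_subset_Icc_self ht)).le
    exact ⟨fun t ht => haω t ⟨ht.1, by rw [hρT]; exact ht.2⟩, hbound⟩
  -- bound on the probability that the limiting hitting time is < T
  have hρi_small : ∀ r : ℝ, 2 ≤ r →
      P {ω | ρi r ω < T} ≤ C / (ENNReal.ofReal (r - 1)) ^ p := by
    intro r hr
    have hr0 : (0:ℝ) < r := by linarith
    have hr1 : (0:ℝ) < r - 1 := by linarith
    have hr1ne0 : ENNReal.ofReal (r - 1) ≠ 0 := by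
      simp only [ne_eq, ENNReal.ofReal_eq_zero, not_le]; exact hr1
    have hstep : ∀ n : ℕ, P {ω | ρi r ω < T} ≤ C / (ENNReal.ofReal (r - 1)) ^ p +
        P {x | (1:ℝ) ≤ dist (⨆ t : Icc (0:ℝ) T, ‖Y n r (t:ℝ) x - Yi r (t:ℝ) x‖) (0:ℝ)} := by
      intro n
      have hsub : ∀ᵐ ω ∂P, ω ∈ {ω | ρi r ω < T} →
          ω ∈ {ω | ENNReal.ofReal (r - 1) ≤ A n ω} ∪
            {x | (1:ℝ) ≤ dist (⨆ t : Icc (0:ℝ) T, ‖Y n r (t:ℝ) x - Yi r (t:ℝ) x‖) (0:ℝ)} := by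
        filter_upwards [hai r hr0, hkeyn n r hr0, hkeyn n (r-1) hr1] with ω haiω hk1 hk2
        intro hρilt
        by_contra hcon
        rw [mem_union, not_or] at hcon
        obtain ⟨hc1, hc2⟩ := hcon
        rw [mem_setOf_eq, not_le] at hc1
        rw [mem_setOf_eq, not_le, Real.dist_0_eq_abs,
          abs_of_nonneg (Real.iSup_nonneg fun t => norm_nonneg _)] at hc2
        have hρeq : ρi r ω = sInf ({t : ℝ | t ∈ Ioo 0 (σi ω) ∧ r < ‖Xi t ω‖} ∪ {T}) :=
          hρi r ω
        have hkey := Stmt10Aux.key_inf (hσimem ω) (hXicont ω) (by rw [← hρeq]; exact hρilt)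
        rw [← hρeq] at hkey
        obtain ⟨hmIco, hXige⟩ := hkey
        have hmIcc : ρi r ω ∈ Icc (0:ℝ) T := ⟨hmIco.1, hmIco.2.le.trans (hσimem ω).2⟩
        have hYiXi : Yi r (ρi r ω) ω = Xi (ρi r ω) ω := haiω _ ⟨hmIco.1, le_refl _⟩
        have hYX : ∀ t ∈ Icc (0:ℝ) T, Y n r t ω = X n t ω :=
          (hk1 (lt_of_lt_of_le hc1 (ENNReal.ofReal_le_ofReal (by linarith)))).1
        have hXlt : ∀ t ∈ Icc (0:ℝ) T, ‖X n t ω‖ < r - 1 := (hk2 hc1).2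
        have hcontd : ContinuousOn (fun t => Y n r t ω - Yi r t ω) (Icc 0 T) :=
          ((hYcont n r ω).sub (hYicont r ω)).continuousOn
        obtain ⟨t0, ht0, hmax⟩ := Stmt10Aux.exists_max hT.le hcontd
        have hsup_eq := Stmt10Aux.sup_eq hT.le ht0 hmax
        have hd : ‖Y n r (ρi r ω) ω - Yi r (ρi r ω) ω‖
            ≤ ⨆ t : Icc (0:ℝ) T, ‖Y n r (t:ℝ) ω - Yi r (t:ℝ) ω‖ := by
          rw [hsup_eq]; exact hmax _ hmIcc
        have h5 : ‖Yi r (ρi r ω) ω‖ - ‖Y n r (ρi r ω) ω‖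
            ≤ ‖Y n r (ρi r ω) ω - Yi r (ρi r ω) ω‖ := by
          rw [norm_sub_rev]
          exact norm_sub_norm_le _ _
        have h6 : ‖Y n r (ρi r ω) ω‖ < r - 1 := by
          rw [hYX _ hmIcc]; exact hXlt _ hmIcc
        have hXige' : r ≤ ‖Yi r (ρi r ω) ω‖ := by rw [hYiXi]; exact hXige
        have h7 : ‖Y n r (ρi r ω) ω - Yi r (ρi r ω) ω‖ < 1 := lt_of_le_of_lt hd hc2
        linarith
      calc P {ω | ρi r ω < T}
          ≤ P ({ω | ENNReal.ofReal (r - 1) ≤ A n ω} ∪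
            {x | (1:ℝ) ≤ dist (⨆ t : Icc (0:ℝ) T, ‖Y n r (t:ℝ) x - Yi r (t:ℝ) x‖) (0:ℝ)}) :=
            measure_mono_ae hsub
      _ ≤ P {ω | ENNReal.ofReal (r - 1) ≤ A n ω} +
          P {x | (1:ℝ) ≤ dist (⨆ t : Icc (0:ℝ) T, ‖Y n r (t:ℝ) x - Yi r (t:ℝ) x‖) (0:ℝ)} :=
            measure_union_le _ _
      _ ≤ C / (ENNReal.ofReal (r - 1)) ^ p +
          P {x | (1:ℝ) ≤ dist (⨆ t : Icc (0:ℝ) T, ‖Y n r (t:ℝ) x - Yi r (t:ℝ) x‖) (0:ℝ)} :=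
            add_le_add_left (hmarkov n _ hr1ne0 ENNReal.ofReal_ne_top) _
    have hbr : Tendsto (fun n => P {x | (1:ℝ) ≤
        dist (⨆ t : Icc (0:ℝ) T, ‖Y n r (t:ℝ) x - Yi r (t:ℝ) x‖) (0:ℝ)}) atTop (nhds 0) :=
      tendstoInMeasure_iff_dist.1 (hb r hr0) 1 one_pos
    have hlim : Tendsto (fun n : ℕ => C / (ENNReal.ofReal (r - 1)) ^ p +
        P {x | (1:ℝ) ≤ dist (⨆ t : Icc (0:ℝ) T, ‖Y n r (t:ℝ) x - Yi r (t:ℝ) x‖) (0:ℝ)})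
        atTop (nhds (C / (ENNReal.ofReal (r - 1)) ^ p + 0)) :=
      Tendsto.add tendsto_const_nhds hbr
    rw [add_zero] at hlim
    exact ge_of_tendsto hlim (Filter.Eventually.of_forall hstep)
  -- σi = T almost surely
  have hσiT : ∀ᵐ ω ∂P, σi ω = T := by
    have hsub : ∀ r : ℝ, 2 ≤ r → {ω | ¬ σi ω = T} ⊆ {ω | ρi r ω < T} := by
      intro r hr ω hω
      have hlt : σi ω < T := lt_of_le_of_ne (hσimem ω).2 hω
      have hfreq := hexpli ω hlt r
      have hIoo : ∀ᶠ t in nhdsWithin (σi ω) (Iio (σi ω)), t ∈ Ioo (0:ℝ) (σi ω) :=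
        Ioo_mem_nhdsLT (hσimem ω).1
      obtain ⟨t, htn, htI⟩ := (hfreq.and_eventually hIoo).exists
      have hle : ρi r ω ≤ t := by
        rw [hρi r ω]
        exact Stmt10Aux.inf_le_mem (hσimem ω) ⟨htI, htn⟩
      exact lt_of_le_of_lt hle (htI.2.trans hlt)
    have hbound : ∀ r : ℝ, 2 ≤ r →
        P {ω | ¬ σi ω = T} ≤ C / (ENNReal.ofReal (r - 1)) ^ p :=
      fun r hr => (measure_mono (hsub r hr)).trans (hρi_small r hr)
    have hzero : P {ω | ¬ σi ω = T} = 0 := by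
      refine le_antisymm (ENNReal.le_of_forall_pos_le_add fun ε hε _ => ?_) (zero_le)
      rw [zero_add]
      obtain ⟨R, hRge, hR⟩ := Stmt10Aux.div_rpow_small hC.ne
        (by exact_mod_cast hε : (0:ℝ≥0∞) < (ε:ℝ≥0∞)) hp0
      refine (hbound (max 2 (R+1)) (le_max_left _ _)).trans (hR _ ?_)
      have := le_max_right 2 (R+1)
      linarith
    exact hzero
  -- consequences for the limit process
  have hBeq : ∀ᵐ ω ∂P, B ω = ENNReal.ofReal (⨆ t : Icc (0:ℝ) T, ‖Xi (t:ℝ) ω‖) :=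
    hσiT.mono fun ω h => Stmt10Aux.sup_enorm_eq hT.le hvmem hvd (hXicontT ω h)
  have hBlt : ∀ᵐ ω ∂P, B ω < ⊤ :=
    hBeq.mono fun ω h => by rw [h]; exact ENNReal.ofReal_lt_top
  have hkeyi : ∀ r : ℝ, 0 < r → ∀ᵐ ω ∂P,
      B ω < ENNReal.ofReal r → ∀ t ∈ Icc (0:ℝ) T, Yi r t ω = Xi t ω := by
    intro r hr
    filter_upwards [hai r hr, hσiT, hBeq] with ω haiω hσω hBeqω
    intro hBlt'
    have hcont := hXicontT ω hσω
    have hsup_lt : (⨆ t : Icc (0:ℝ) T, ‖Xi (t:ℝ) ω‖) < r := by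
      rw [hBeqω] at hBlt'
      exact (ENNReal.ofReal_lt_ofReal_iff hr).1 hBlt'
    have hbound : ∀ t ∈ Icc (0:ℝ) T, ‖Xi t ω‖ < r := by
      intro t ht
      obtain ⟨t0, ht0, hmax⟩ := Stmt10Aux.exists_max hT.le hcont
      have hsupeq := Stmt10Aux.sup_eq hT.le ht0 hmax
      calc ‖Xi t ω‖ ≤ ‖Xi t0 ω‖ := hmax t ht
      _ = ⨆ t : Icc (0:ℝ) T, ‖Xi (t:ℝ) ω‖ := hsupeq.symm
      _ < r := hsup_lt
    have hρT : ρi r ω = T := by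
      rw [hρi r ω, hσω]
      exact Stmt10Aux.inf_eq_T fun t ht =>
        not_lt.2 (hbound t (Ioo_subset_Icc_self ht)).le
    exact fun t ht => haiω t ⟨ht.1, by rw [hρT]; exact ht.2⟩
  -- tail bound for B
  have hBtail : ∀ r : ℝ, 2 ≤ r →
      P {ω | ENNReal.ofReal (2 * r) ≤ B ω} ≤ C / (ENNReal.ofReal (r - 1)) ^ p := by
    intro r hr
    refine le_trans (measure_mono_ae ?_) (hρi_small r hr)
    filter_upwards [hσiT, hBeq] with ω hσω hBeqω
    intro hB2r
    have hB2r' : ENNReal.ofReal (2*r) ≤ B ω := hB2r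
    show ρi r ω < T
    by_contra hcon
    have hTle : ρi r ω ≤ T := by
      rw [hρi r ω]; exact Stmt10Aux.inf_le_T hT.le (hσimem ω).2
    have heqT : ρi r ω = T := le_antisymm hTle (not_lt.1 hcon)
    have hno : ∀ t ∈ Ioo (0:ℝ) (σi ω), ‖Xi t ω‖ ≤ r := by
      intro t ht
      by_contra hgt
      rw [not_le] at hgt
      have hle : ρi r ω ≤ t := by
        rw [hρi r ω]; exact Stmt10Aux.inf_le_mem (hσimem ω) ⟨ht, hgt⟩
      have : ρi r ω < T := lt_of_le_of_lt hle (lt_of_lt_of_le ht.2 (hσimem ω).2)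
      rw [heqT] at this; exact lt_irrefl _ this
    have hIcc : ∀ t ∈ Icc (0:ℝ) T, ‖Xi t ω‖ ≤ r :=
      Stmt10Aux.norm_le_of_interior hT (hXicontT ω hσω)
        (fun t ht => hno t (by rw [hσω]; exact ht))
    have hBle : B ω ≤ ENNReal.ofReal r := by
      rw [hBeqω]
      refine ENNReal.ofReal_le_ofReal ?_
      obtain ⟨t0, ht0, hmax⟩ := Stmt10Aux.exists_max hT.le (hXicontT ω hσω)
      rw [Stmt10Aux.sup_eq hT.le ht0 hmax]
      exact hIcc t0 ht0
    have hfin := le_trans hB2r' hBle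
    rw [ENNReal.ofReal_le_ofReal_iff (by linarith : (0:ℝ) ≤ r)] at hfin
    linarith
  -- dyadic tail bounds for B
  have htailBk : ∀ k : ℕ, P {ω | ENNReal.ofReal ((2:ℝ) ^ (k + 2)) ≤ B ω}
      ≤ C / (ENNReal.ofReal ((2:ℝ) ^ k)) ^ p := by
    intro k
    have h2k1 : (2:ℝ) ≤ 2 ^ (k + 1) := by
      calc (2:ℝ) = 2 ^ 1 := (pow_one 2).symm
      _ ≤ 2 ^ (k + 1) := pow_le_pow_right₀ (by norm_num) (by omega)
    have h1 := hBtail ((2:ℝ) ^ (k + 1)) h2k1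
    have hseteq : {ω | ENNReal.ofReal ((2:ℝ) ^ (k + 2)) ≤ B ω}
        = {ω | ENNReal.ofReal (2 * (2:ℝ) ^ (k + 1)) ≤ B ω} := by
      congr 2
      ring
    rw [hseteq]
    refine h1.trans (ENNReal.div_le_div_left (ENNReal.rpow_le_rpow ?_ hp0.le) C)
    refine ENNReal.ofReal_le_ofReal ?_
    have h1le : (1:ℝ) ≤ 2 ^ k := one_le_pow₀ (by norm_num)
    calc (2:ℝ) ^ k = 2 ^ (k+1) - 2 ^ k := by ring
    _ ≤ 2 ^ (k + 1) - 1 := by linarith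
  -- q-th moment of B is finite
  have hBqint : ∫⁻ ω, B ω ^ q ∂P ≠ ⊤ := by
    have hub : ∀ᵐ ω ∂P, B ω ^ q ≤ (ENNReal.ofReal ((2:ℝ) ^ 2)) ^ q
        + ∑' k : ℕ, (if ENNReal.ofReal ((2:ℝ) ^ (k + 2)) ≤ B ω
            then (ENNReal.ofReal ((2:ℝ) ^ (k + 3))) ^ q else 0) :=
      hBlt.mono fun ω h => Stmt10Aux.layer_bound h.ne hq0.le
    have hind : ∀ k : ℕ, (fun ω => if ENNReal.ofReal ((2:ℝ) ^ (k + 2)) ≤ B ω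
        then (ENNReal.ofReal ((2:ℝ) ^ (k + 3))) ^ q else 0)
        = ({ω | ENNReal.ofReal ((2:ℝ) ^ (k + 2)) ≤ B ω}).indicator
            (fun _ => (ENNReal.ofReal ((2:ℝ) ^ (k + 3))) ^ q) := by
      intro k
      funext ω
      by_cases h : ENNReal.ofReal ((2:ℝ) ^ (k + 2)) ≤ B ω <;>
        simp [Set.indicator_apply, h]
    have hmeasset : ∀ k : ℕ, MeasurableSet {ω | ENNReal.ofReal ((2:ℝ) ^ (k + 2)) ≤ B ω} :=
      fun k => measurableSet_le measurable_const hBmeas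
    have hsum : ∫⁻ ω, (∑' k : ℕ, (if ENNReal.ofReal ((2:ℝ) ^ (k + 2)) ≤ B ω
        then (ENNReal.ofReal ((2:ℝ) ^ (k + 3))) ^ q else 0)) ∂P
        ≤ ∑' k : ℕ, (ENNReal.ofReal ((2:ℝ) ^ (k + 3))) ^ q *
            (C / (ENNReal.ofReal ((2:ℝ) ^ k)) ^ p) := by
      rw [lintegral_tsum fun k => by
        rw [hind k]
        exact ((measurable_const).indicator (hmeasset k)).aemeasurable]
      refine ENNReal.tsum_le_tsum fun k => ?_
      rw [hind k, lintegral_indicator (hmeasset k), setLIntegral_const]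
      exact mul_le_mul_right (htailBk k) _
    have hle : ∫⁻ ω, B ω ^ q ∂P ≤ (ENNReal.ofReal ((2:ℝ) ^ 2)) ^ q
        + ∑' k : ℕ, (ENNReal.ofReal ((2:ℝ) ^ (k + 3))) ^ q *
            (C / (ENNReal.ofReal ((2:ℝ) ^ k)) ^ p) := by
      calc ∫⁻ ω, B ω ^ q ∂P ≤ ∫⁻ ω, ((ENNReal.ofReal ((2:ℝ) ^ 2)) ^ q
          + ∑' k : ℕ, (if ENNReal.ofReal ((2:ℝ) ^ (k + 2)) ≤ B ω
              then (ENNReal.ofReal ((2:ℝ) ^ (k + 3))) ^ q else 0)) ∂P := lintegral_mono_ae hub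
      _ = (ENNReal.ofReal ((2:ℝ) ^ 2)) ^ q * P univ
          + ∫⁻ ω, (∑' k : ℕ, (if ENNReal.ofReal ((2:ℝ) ^ (k + 2)) ≤ B ω
              then (ENNReal.ofReal ((2:ℝ) ^ (k + 3))) ^ q else 0)) ∂P := by
            rw [lintegral_add_left measurable_const, lintegral_const]
      _ ≤ (ENNReal.ofReal ((2:ℝ) ^ 2)) ^ q
          + ∑' k : ℕ, (ENNReal.ofReal ((2:ℝ) ^ (k + 3))) ^ q *
              (C / (ENNReal.ofReal ((2:ℝ) ^ k)) ^ p) := by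
            rw [measure_univ, mul_one]
            exact add_le_add_right hsum _
    refine ne_top_of_le_ne_top ?_ hle
    refine ENNReal.add_ne_top.2 ⟨?_, Stmt10Aux.geom_ne_top hC.ne hq0 hqp⟩
    exact ENNReal.rpow_ne_top_of_nonneg hq0.le ENNReal.ofReal_ne_top
  -- tail integrals of B tend to zero
  have hSB : Tendsto (fun j : ℕ => ∫⁻ ω in {ω | (j:ℝ≥0∞) ≤ B ω}, B ω ^ q ∂P)
      atTop (nhds 0) := by
    have hFmeas : ∀ j : ℕ, Measurable fun ω =>
        ({ω | (j:ℝ≥0∞) ≤ B ω}).indicator (fun ω => B ω ^ q) ω :=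
      fun j => (Stmt10Aux.measurable_rpow_const hBmeas q).indicator
        (measurableSet_le measurable_const hBmeas)
    have hdom := tendsto_lintegral_of_dominated_convergence
      (μ := P) (F := fun j ω => ({ω | (j:ℝ≥0∞) ≤ B ω}).indicator (fun ω => B ω ^ q) ω)
      (f := fun _ => 0) (fun ω => B ω ^ q) hFmeas
      (fun j => Filter.Eventually.of_forall fun ω => Set.indicator_le_self _ _ ω)
      hBqint ?_
    · have heq : ∀ j : ℕ, ∫⁻ ω, ({ω | (j:ℝ≥0∞) ≤ B ω}).indicator (fun ω => B ω ^ q) ω ∂P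
          = ∫⁻ ω in {ω | (j:ℝ≥0∞) ≤ B ω}, B ω ^ q ∂P :=
        fun j => lintegral_indicator (measurableSet_le measurable_const hBmeas) _
      rw [lintegral_zero] at hdom
      exact (tendsto_congr heq).1 hdom
    · filter_upwards [hBlt] with ω hω
      obtain ⟨j0, hj0⟩ := ENNReal.exists_nat_gt hω.ne
      refine Tendsto.congr' ?_ tendsto_const_nhds
      filter_upwards [eventually_ge_atTop j0] with j hj
      have hnot : ¬ ((j:ℝ≥0∞) ≤ B ω) := by
        rw [not_le]
        exact lt_of_lt_of_le hj0 (by exact_mod_cast hj)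
      have hnot' : ω ∉ {ω | (j:ℝ≥0∞) ≤ B ω} := hnot
      exact (Set.indicator_of_notMem hnot' _).symm
  -- the middle-probability bound
  have hmid : ∀ (η r : ℝ), 0 < η → 4 ≤ r → ∀ n : ℕ,
      P {ω | ENNReal.ofReal η ≤ W n ω} ≤ C / (ENNReal.ofReal r) ^ p
        + C / (ENNReal.ofReal (r/2 - 1)) ^ p
        + P {x | η ≤ dist (⨆ t : Icc (0:ℝ) T, ‖Y n r (t:ℝ) x - Yi r (t:ℝ) x‖) (0:ℝ)} := by
    intro η r hη hr n
    have hr0 : (0:ℝ) < r := by linarith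
    have hsub : ∀ᵐ ω ∂P, ω ∈ {ω | ENNReal.ofReal η ≤ W n ω} →
        ω ∈ {ω | ENNReal.ofReal r ≤ A n ω} ∪ ({ω | ENNReal.ofReal r ≤ B ω} ∪
          {x | η ≤ dist (⨆ t : Icc (0:ℝ) T, ‖Y n r (t:ℝ) x - Yi r (t:ℝ) x‖) (0:ℝ)}) := by
      filter_upwards [hkeyn n r hr0, hkeyi r hr0] with ω hk1 hk2
      intro hmem
      by_contra hcon
      rw [mem_union, mem_union, not_or, not_or] at hcon
      obtain ⟨hc1, hc2, hc3⟩ := hcon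
      rw [mem_setOf_eq, not_le] at hc1 hc2
      rw [mem_setOf_eq, not_le, Real.dist_0_eq_abs,
        abs_of_nonneg (Real.iSup_nonneg fun t => norm_nonneg _)] at hc3
      have hYX := (hk1 hc1).1
      have hYiXi := hk2 hc2
      have hcontd : ContinuousOn (fun t => Y n r t ω - Yi r t ω) (Icc 0 T) :=
        ((hYcont n r ω).sub (hYicont r ω)).continuousOn
      obtain ⟨t0, ht0, hmax⟩ := Stmt10Aux.exists_max hT.le hcontd
      have hsup_eq := Stmt10Aux.sup_eq hT.le ht0 hmax
      have hΔ0 : (0:ℝ) ≤ ⨆ t : Icc (0:ℝ) T, ‖Y n r (t:ℝ) ω - Yi r (t:ℝ) ω‖ :=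
        Real.iSup_nonneg fun t => norm_nonneg _
      have hWled : W n ω
          ≤ ENNReal.ofReal (⨆ t : Icc (0:ℝ) T, ‖Y n r (t:ℝ) ω - Yi r (t:ℝ) ω‖) := by
        rw [hW]
        refine iSup_le fun k => ?_
        rw [show X n (v k) ω - Xi (v k) ω = Y n r (v k) ω - Yi r (v k) ω by
          rw [hYX _ (hvmem k), hYiXi _ (hvmem k)]]
        rw [← enorm_eq_nnnorm, ← ofReal_norm_eq_enorm]
        refine ENNReal.ofReal_le_ofReal ?_
        rw [hsup_eq]
        exact hmax _ (hvmem k)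
      have hle : η ≤ ⨆ t : Icc (0:ℝ) T, ‖Y n r (t:ℝ) ω - Yi r (t:ℝ) ω‖ :=
        (ENNReal.ofReal_le_ofReal_iff hΔ0).1 (le_trans hmem hWled)
      linarith
    have hPB : P {ω | ENNReal.ofReal r ≤ B ω} ≤ C / (ENNReal.ofReal (r/2 - 1)) ^ p := by
      refine le_trans (measure_mono ?_) (hBtail (r/2) (by linarith))
      intro ω hω
      rw [mem_setOf_eq] at hω ⊢
      exact le_trans (ENNReal.ofReal_le_ofReal (le_of_eq (by ring))) hω
    calc P {ω | ENNReal.ofReal η ≤ W n ω}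
        ≤ P ({ω | ENNReal.ofReal r ≤ A n ω} ∪ ({ω | ENNReal.ofReal r ≤ B ω} ∪
          {x | η ≤ dist (⨆ t : Icc (0:ℝ) T, ‖Y n r (t:ℝ) x - Yi r (t:ℝ) x‖) (0:ℝ)})) :=
          measure_mono_ae hsub
    _ ≤ P {ω | ENNReal.ofReal r ≤ A n ω} + (P {ω | ENNReal.ofReal r ≤ B ω} +
          P {x | η ≤ dist (⨆ t : Icc (0:ℝ) T, ‖Y n r (t:ℝ) x - Yi r (t:ℝ) x‖) (0:ℝ)}) :=
          le_trans (measure_union_le _ _) (add_le_add_right (measure_union_le _ _) _)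
    _ ≤ C / (ENNReal.ofReal r) ^ p + (C / (ENNReal.ofReal (r/2 - 1)) ^ p +
          P {x | η ≤ dist (⨆ t : Icc (0:ℝ) T, ‖Y n r (t:ℝ) x - Yi r (t:ℝ) x‖) (0:ℝ)}) := by
          refine add_le_add ?_ (add_le_add_left hPB _)
          refine hmarkov n _ ?_ ENNReal.ofReal_ne_top
          simp only [ne_eq, ENNReal.ofReal_eq_zero, not_le]
          linarith
    _ = _ := by ring
  -- reduction of the goal to W
  have hIeq : ∀ n : ℕ, ∫⁻ ω, ENNReal.ofReal
      ((⨆ t : Icc (0:ℝ) T, ‖X n (t:ℝ) ω - Xi (t:ℝ) ω‖) ^ q) ∂P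
      = ∫⁻ ω, W n ω ^ q ∂P := by
    intro n
    refine lintegral_congr_ae ?_
    filter_upwards [hσT n, hσiT] with ω h1 h2
    have hcont : ContinuousOn (fun t => X n t ω - Xi t ω) (Icc 0 T) :=
      (hXcontT n ω h1).sub (hXicontT ω h2)
    have hWeq : W n ω
        = ENNReal.ofReal (⨆ t : Icc (0:ℝ) T, ‖X n (t:ℝ) ω - Xi (t:ℝ) ω‖) :=
      Stmt10Aux.sup_enorm_eq hT.le hvmem hvd hcont
    rw [hWeq, ENNReal.ofReal_rpow_of_nonneg (Real.iSup_nonneg fun t => norm_nonneg _) hq0.le]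
  refine (tendsto_congr hIeq).2 ?_
  rw [ENNReal.tendsto_nhds_zero]
  intro ε hε
  rcases eq_or_ne ε ⊤ with hεt | hεt
  · exact Filter.Eventually.of_forall fun n => hεt ▸ le_top
  set u := ε / 16 with hu
  have hu0 : u ≠ 0 := (ENNReal.div_pos hε.ne' (by norm_num)).ne'
  have hut : u ≠ ⊤ := (ENNReal.div_lt_top hεt (by norm_num)).ne
  set c2 := (2:ℝ≥0∞) ^ q with hc2
  have hc2t : c2 ≠ ⊤ := ENNReal.rpow_ne_top_of_nonneg hq0.le (by norm_num)
  have hc20 : c2 ≠ 0 := by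
    rw [hc2, ne_eq, ENNReal.rpow_eq_zero_iff]
    push_neg
    exact ⟨fun h => absurd h (by norm_num), fun h => absurd h (by norm_num)⟩
  set e3 := u / c2 with he3
  have he30 : e3 ≠ 0 := (ENNReal.div_pos hu0 hc2t).ne'
  have hcu : c2 * e3 ≤ u := ENNReal.mul_div_le
  obtain ⟨R1, hR1ge, hR1⟩ := Stmt10Aux.div_rpow_small hC.ne (zero_lt_iff.2 he30) hpq0
  have hSBev := (ENNReal.tendsto_nhds_zero.1 hSB) e3 (zero_lt_iff.2 he30)
  obtain ⟨j0, hj0SB, hj0ge⟩ := (hSBev.and (eventually_ge_atTop (max 1 ⌈R1⌉₊))).exists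
  set K : ℝ≥0∞ := (j0 : ℝ≥0∞) with hK
  have hj0R1 : R1 ≤ (j0:ℝ) := by
    refine le_trans (Nat.le_ceil R1) ?_
    exact_mod_cast le_trans (le_max_right 1 ⌈R1⌉₊) hj0ge
  have hj01 : 1 ≤ j0 := le_trans (le_max_left _ _) hj0ge
  have hK0 : K ≠ 0 := by
    rw [hK, ne_eq, Nat.cast_eq_zero]
    omega
  have hKt : K ≠ ⊤ := ENNReal.natCast_ne_top j0
  have hKofReal : ENNReal.ofReal ((j0:ℝ)) = K := ENNReal.ofReal_natCast j0
  have hKb : C / K ^ (p - q) ≤ e3 := by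
    rw [← hKofReal]; exact hR1 _ hj0R1
  have hKqC : K ^ q * C ≠ ⊤ :=
    ENNReal.mul_ne_top (ENNReal.rpow_ne_top_of_nonneg hq0.le hKt) hC.ne
  obtain ⟨R2, hR2ge, hR2⟩ := Stmt10Aux.div_rpow_small hKqC (zero_lt_iff.2 he30) hp0
  set lam := max (max (2*R1) (2*R2)) (max (4*(R2+1)) (max (2*(j0:ℝ)) 1)) with hlam
  have hlamR1 : R1 ≤ lam/2 := by
    have := le_trans (le_max_left (2*R1) (2*R2)) (le_max_left (max (2*R1) (2*R2)) (max (4*(R2+1)) (max (2*(j0:ℝ)) 1)))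
    linarith
  have hlamR2 : R2 ≤ lam/2 := by
    have := le_trans (le_max_right (2*R1) (2*R2)) (le_max_left (max (2*R1) (2*R2)) (max (4*(R2+1)) (max (2*(j0:ℝ)) 1)))
    linarith
  have hlamR2' : R2 ≤ lam/4 - 1 := by
    have := le_trans (le_max_left (4*(R2+1)) (max (2*(j0:ℝ)) 1)) (le_max_right (max (2*R1) (2*R2)) (max (4*(R2+1)) (max (2*(j0:ℝ)) 1)))
    linarith
  have hlamj0 : (j0:ℝ) ≤ lam/2 := by
    have := le_trans (le_trans (le_max_left (2*(j0:ℝ)) 1)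
      (le_max_right (4*(R2+1)) (max (2*(j0:ℝ)) 1))) (le_max_right (max (2*R1) (2*R2)) (max (4*(R2+1)) (max (2*(j0:ℝ)) 1)))
    linarith
  have hlam1 : (1:ℝ) ≤ lam :=
    le_trans (le_trans (le_max_right (2*(j0:ℝ)) 1)
      (le_max_right (4*(R2+1)) (max (2*(j0:ℝ)) 1))) (le_max_right (max (2*R1) (2*R2)) (max (4*(R2+1)) (max (2*(j0:ℝ)) 1)))
  have hlam8 : (8:ℝ) ≤ lam := by
    have h1 : (1:ℝ) ≤ R2 := hR2ge
    have := le_trans (le_max_left (4*(R2+1)) (max (2*(j0:ℝ)) 1)) (le_max_right (max (2*R1) (2*R2)) (max (4*(R2+1)) (max (2*(j0:ℝ)) 1)))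
    linarith
  set L := ENNReal.ofReal (lam/2) with hL
  have hL0 : L ≠ 0 := by
    rw [hL, ne_eq, ENNReal.ofReal_eq_zero, not_le]
    linarith
  have hLt : L ≠ ⊤ := ENNReal.ofReal_ne_top
  set Λ := ENNReal.ofReal lam with hΛ
  have hΛt : Λ ≠ ⊤ := ENNReal.ofReal_ne_top
  have hΛ0 : Λ ≠ 0 := by
    rw [hΛ, ne_eq, ENNReal.ofReal_eq_zero, not_le]
    linarith
  have hΛq0 : Λ ^ q ≠ 0 := by
    rw [ne_eq, ENNReal.rpow_eq_zero_iff]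
    push_neg
    exact ⟨fun h => absurd h hΛ0, fun h => absurd h hΛt⟩
  have hΛqt : Λ ^ q ≠ ⊤ := ENNReal.rpow_ne_top_of_nonneg hq0.le hΛt
  have hLL : L + L = Λ := by
    rw [hL, hΛ, ← ENNReal.ofReal_add (by linarith) (by linarith)]
    congr 1
    ring
  set η := min 1 u.toReal with hη
  have hη0 : 0 < η := lt_min one_pos (ENNReal.toReal_pos hu0 hut)
  have hηb : (ENNReal.ofReal η) ^ q ≤ u := by
    have h1 : ENNReal.ofReal η ≤ 1 := by
      rw [show (1:ℝ≥0∞) = ENNReal.ofReal 1 by simp]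
      exact ENNReal.ofReal_le_ofReal (min_le_left _ _)
    have h2 : ENNReal.ofReal η ≤ u :=
      le_trans (ENNReal.ofReal_le_ofReal (min_le_right _ _))
        (le_of_eq (ENNReal.ofReal_toReal hut))
    calc (ENNReal.ofReal η) ^ q ≤ (ENNReal.ofReal η) ^ (1:ℝ) :=
          ENNReal.rpow_le_rpow_of_exponent_ge h1 hq1
    _ = ENNReal.ofReal η := ENNReal.rpow_one _
    _ ≤ u := h2
  have hΛqC : Λ ^ q * C ≠ ⊤ :=
    ENNReal.mul_ne_top (ENNReal.rpow_ne_top_of_nonneg hq0.le hΛt) hC.ne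
  obtain ⟨R3, hR3ge, hR3⟩ := Stmt10Aux.div_rpow_small hΛqC (zero_lt_iff.2 hu0) hp0
  set r' := max 4 (max R3 (2*(R3+1))) with hr'
  have hr'4 : (4:ℝ) ≤ r' := le_max_left _ _
  have hr'0 : (0:ℝ) < r' := by linarith
  have hr'R3 : R3 ≤ r' := le_trans (le_max_left R3 _) (le_max_right 4 _)
  have hr'R3' : R3 ≤ r'/2 - 1 := by
    have := le_trans (le_max_right R3 (2*(R3+1))) (le_max_right 4 _)
    linarith
  have hbev := tendstoInMeasure_iff_dist.1 (hb r' hr'0) η hη0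
  have hquo0 : (0:ℝ≥0∞) < u / Λ ^ q := ENNReal.div_pos hu0 hΛqt
  have hev := (ENNReal.tendsto_nhds_zero.1 hbev) _ hquo0
  filter_upwards [hev] with n hn
  -- measurable hull of the middle set, and the measurable tail set
  set S1 := toMeasurable P {ω | ENNReal.ofReal η ≤ W n ω} with hS1
  set S3 := {ω | L ≤ A n ω} ∪ {ω | L ≤ B ω} with hS3
  have hm1 : MeasurableSet S1 := measurableSet_toMeasurable _ _
  have hm3 : MeasurableSet S3 :=
    (measurableSet_le measurable_const (hAmeas n)).union
      (measurableSet_le measurable_const hBmeas)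
  have hsub2 : ∀ ω, Λ ≤ W n ω → ω ∈ S3 := by
    intro ω hω
    by_contra hcon
    rw [hS3, mem_union, not_or] at hcon
    obtain ⟨h1, h2⟩ := hcon
    rw [mem_setOf_eq, not_le] at h1 h2
    have hWlt : W n ω < Λ := lt_of_le_of_lt (hWle n ω)
      (by rw [← hLL]; exact ENNReal.add_lt_add h1 h2)
    exact absurd hω (not_le.2 hWlt)
  -- pointwise layer decomposition
  have hpt : ∀ ω, W n ω ^ q ≤ (ENNReal.ofReal η) ^ q
      + S1.indicator (fun _ => Λ ^ q) ω
      + S3.indicator (fun ω => W n ω ^ q) ω := by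
    intro ω
    rcases lt_or_ge (W n ω) (ENNReal.ofReal η) with h1 | h1
    · exact le_trans (ENNReal.rpow_le_rpow h1.le hq0.le) (le_trans le_self_add le_self_add)
    rcases le_or_gt (W n ω) Λ with h2 | h2
    · have hmem : ω ∈ S1 := subset_toMeasurable _ _ h1
      calc W n ω ^ q ≤ Λ ^ q := ENNReal.rpow_le_rpow h2 hq0.le
      _ = S1.indicator (fun _ => Λ ^ q) ω := (Set.indicator_of_mem hmem (fun _ => Λ ^ q)).symm
      _ ≤ _ := le_trans le_add_self le_self_add
    · have hmem : ω ∈ S3 := hsub2 ω h2.le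
      calc W n ω ^ q = S3.indicator (fun ω => W n ω ^ q) ω :=
          (Set.indicator_of_mem hmem (fun ω => W n ω ^ q)).symm
      _ ≤ _ := le_add_self
  have hint : ∫⁻ ω, W n ω ^ q ∂P ≤ (ENNReal.ofReal η) ^ q
      + Λ ^ q * P {ω | ENNReal.ofReal η ≤ W n ω}
      + ∫⁻ ω in S3, W n ω ^ q ∂P := by
    calc ∫⁻ ω, W n ω ^ q ∂P
        ≤ ∫⁻ ω, ((ENNReal.ofReal η) ^ q
          + S1.indicator (fun _ => Λ ^ q) ω
          + S3.indicator (fun ω => W n ω ^ q) ω) ∂P := lintegral_mono hpt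
    _ = (ENNReal.ofReal η) ^ q + Λ ^ q * P S1 + ∫⁻ ω in S3, W n ω ^ q ∂P := by
        rw [lintegral_add_left (f := fun ω => (ENNReal.ofReal η) ^ q + S1.indicator (fun _ => Λ ^ q) ω)
            (measurable_const.add (measurable_const.indicator hm1)),
          lintegral_add_left measurable_const, lintegral_const, measure_univ, mul_one,
          lintegral_indicator hm1, setLIntegral_const,
          lintegral_indicator hm3]
    _ = (ENNReal.ofReal η) ^ q
        + Λ ^ q * P {ω | ENNReal.ofReal η ≤ W n ω}
        + ∫⁻ ω in S3, W n ω ^ q ∂P := by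
        rw [hS1, measure_toMeasurable]
  -- middle term bound
  have hmid2 : Λ ^ q * P {ω | ENNReal.ofReal η ≤ W n ω} ≤ u + u + u := by
    calc Λ ^ q * P {ω | ENNReal.ofReal η ≤ W n ω}
        ≤ Λ ^ q * (C / (ENNReal.ofReal r') ^ p + C / (ENNReal.ofReal (r'/2 - 1)) ^ p
          + P {x | η ≤ dist (⨆ t : Icc (0:ℝ) T, ‖Y n r' (t:ℝ) x - Yi r' (t:ℝ) x‖) (0:ℝ)}) :=
          mul_le_mul_right (hmid η r' hη0 hr'4 n) _
    _ = Λ ^ q * (C / (ENNReal.ofReal r') ^ p)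
        + Λ ^ q * (C / (ENNReal.ofReal (r'/2 - 1)) ^ p)
        + Λ ^ q * P {x | η ≤ dist
            (⨆ t : Icc (0:ℝ) T, ‖Y n r' (t:ℝ) x - Yi r' (t:ℝ) x‖) (0:ℝ)} := by
        rw [mul_add, mul_add]
    _ ≤ u + u + u := by
        refine add_le_add (add_le_add ?_ ?_) ?_
        · rw [← mul_div_assoc]
          exact hR3 r' hr'R3
        · rw [← mul_div_assoc]
          exact hR3 _ hr'R3'
        · calc Λ ^ q * P {x | η ≤ dist (⨆ t : Icc (0:ℝ) T, ‖Y n r' (t:ℝ) x - Yi r' (t:ℝ) x‖) (0:ℝ)} ≤ Λ ^ q * (u / Λ ^ q) := mul_le_mul_right hn _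
          _ ≤ u := ENNReal.mul_div_le
  -- tail term bound
  have hWpt : ∀ ω, W n ω ^ q ≤ c2 * (A n ω ^ q + B ω ^ q) := fun ω =>
    le_trans (ENNReal.rpow_le_rpow (hWle n ω) hq0.le) (Stmt10Aux.rpow_add_le _ _ hq0.le)
  have hT1 : ∫⁻ ω in {ω | L ≤ A n ω}, A n ω ^ q ∂P ≤ e3 := by
    refine le_trans (Stmt10Aux.tail_rpow P (hAmeas n) hL0 hLt hq0 hqp.le) ?_
    calc L ^ (q - p) * ∫⁻ ω, A n ω ^ p ∂P ≤ L ^ (q - p) * C :=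
          mul_le_mul_right (hAint n) _
    _ = C / L ^ (p - q) := by
          rw [show q - p = -(p - q) by ring, ENNReal.rpow_neg, mul_comm, div_eq_mul_inv]
    _ ≤ e3 := by rw [hL]; exact hR1 _ hlamR1
  have hT4' : ∫⁻ ω in {ω | K ≤ A n ω}, A n ω ^ q ∂P ≤ e3 := by
    refine le_trans (Stmt10Aux.tail_rpow P (hAmeas n) hK0 hKt hq0 hqp.le) ?_
    calc K ^ (q - p) * ∫⁻ ω, A n ω ^ p ∂P ≤ K ^ (q - p) * C :=
          mul_le_mul_right (hAint n) _
    _ = C / K ^ (p - q) := by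
          rw [show q - p = -(p - q) by ring, ENNReal.rpow_neg, mul_comm, div_eq_mul_inv]
    _ ≤ e3 := hKb
  have hT2 : ∫⁻ ω in {ω | L ≤ A n ω}, B ω ^ q ∂P ≤ e3 + e3 := by
    refine le_trans (Stmt10Aux.split_tail P hBmeas
      (measurableSet_le measurable_const (hAmeas n)) K hq0.le) ?_
    refine add_le_add ?_ hj0SB
    calc K ^ q * P {ω | L ≤ A n ω} ≤ K ^ q * (C / L ^ p) :=
          mul_le_mul_right (hmarkov n L hL0 hLt) _
    _ = (K ^ q * C) / L ^ p := by rw [mul_div_assoc]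
    _ ≤ e3 := by rw [hL]; exact hR2 _ hlamR2
  have hT3 : ∫⁻ ω in {ω | L ≤ B ω}, A n ω ^ q ∂P ≤ e3 + e3 := by
    refine le_trans (Stmt10Aux.split_tail P (hAmeas n)
      (measurableSet_le measurable_const hBmeas) K hq0.le) ?_
    refine add_le_add ?_ hT4'
    have hPB : P {ω | L ≤ B ω} ≤ C / (ENNReal.ofReal (lam/4 - 1)) ^ p := by
      refine le_trans (measure_mono ?_) (hBtail (lam/4) (by linarith))
      intro ω hω
      rw [mem_setOf_eq] at hω ⊢
      refine le_trans (ENNReal.ofReal_le_ofReal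
        (le_of_eq (show (2:ℝ)*(lam/4) = lam/2 by ring))) ?_
      rw [← hL]
      exact hω
    calc K ^ q * P {ω | L ≤ B ω} ≤ K ^ q * (C / (ENNReal.ofReal (lam/4 - 1)) ^ p) :=
          mul_le_mul_right hPB _
    _ = (K ^ q * C) / (ENNReal.ofReal (lam/4 - 1)) ^ p := by rw [mul_div_assoc]
    _ ≤ e3 := hR2 _ hlamR2'
  have hT4 : ∫⁻ ω in {ω | L ≤ B ω}, B ω ^ q ∂P ≤ e3 := by
    refine le_trans (lintegral_mono_set ?_) hj0SB
    intro ω hω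
    rw [mem_setOf_eq] at hω ⊢
    refine le_trans ?_ hω
    rw [← hKofReal, hL]
    exact ENNReal.ofReal_le_ofReal hlamj0
  have hmeasAB : Measurable fun ω => A n ω ^ q + B ω ^ q :=
    (Stmt10Aux.measurable_rpow_const (hAmeas n) q).add
      (Stmt10Aux.measurable_rpow_const hBmeas q)
  have hJA : ∫⁻ ω in {ω | L ≤ A n ω}, W n ω ^ q ∂P ≤ c2 * (e3 + (e3 + e3)) := by
    calc ∫⁻ ω in {ω | L ≤ A n ω}, W n ω ^ q ∂P
        ≤ ∫⁻ ω in {ω | L ≤ A n ω}, c2 * (A n ω ^ q + B ω ^ q) ∂P :=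
          lintegral_mono fun ω => hWpt ω
    _ = c2 * ((∫⁻ ω in {ω | L ≤ A n ω}, A n ω ^ q ∂P)
          + ∫⁻ ω in {ω | L ≤ A n ω}, B ω ^ q ∂P) := by
          rw [lintegral_const_mul c2 hmeasAB,
            lintegral_add_left (Stmt10Aux.measurable_rpow_const (hAmeas n) q)]
    _ ≤ c2 * (e3 + (e3 + e3)) := mul_le_mul_right (add_le_add hT1 hT2) _
  have hJB : ∫⁻ ω in {ω | L ≤ B ω}, W n ω ^ q ∂P ≤ c2 * ((e3 + e3) + e3) := by
    calc ∫⁻ ω in {ω | L ≤ B ω}, W n ω ^ q ∂P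
        ≤ ∫⁻ ω in {ω | L ≤ B ω}, c2 * (A n ω ^ q + B ω ^ q) ∂P :=
          lintegral_mono fun ω => hWpt ω
    _ = c2 * ((∫⁻ ω in {ω | L ≤ B ω}, A n ω ^ q ∂P)
          + ∫⁻ ω in {ω | L ≤ B ω}, B ω ^ q ∂P) := by
          rw [lintegral_const_mul c2 hmeasAB,
            lintegral_add_left (Stmt10Aux.measurable_rpow_const (hAmeas n) q)]
    _ ≤ c2 * ((e3 + e3) + e3) := mul_le_mul_right (add_le_add hT3 hT4) _
  have hJ : ∫⁻ ω in S3, W n ω ^ q ∂P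
      ≤ c2 * (e3 + (e3 + e3)) + c2 * ((e3 + e3) + e3) := by
    calc ∫⁻ ω in S3, W n ω ^ q ∂P
        ≤ (∫⁻ ω in {ω | L ≤ A n ω}, W n ω ^ q ∂P)
        + ∫⁻ ω in {ω | L ≤ B ω}, W n ω ^ q ∂P := by
          rw [hS3]; exact lintegral_union_le _ _ _
    _ ≤ c2 * (e3 + (e3 + e3)) + c2 * ((e3 + e3) + e3) := add_le_add hJA hJB
  -- put everything together
  calc ∫⁻ ω, W n ω ^ q ∂P
      ≤ (ENNReal.ofReal η) ^ q + Λ ^ q * P {ω | ENNReal.ofReal η ≤ W n ω}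
        + ∫⁻ ω in S3, W n ω ^ q ∂P := hint
  _ ≤ u + (u + u + u) + (c2 * (e3 + (e3 + e3)) + c2 * ((e3 + e3) + e3)) :=
      add_le_add (add_le_add hηb hmid2) hJ
  _ ≤ u + (u + u + u) + ((u + (u + u)) + ((u + u) + u)) := by
      refine add_le_add_right (add_le_add ?_ ?_) _
      · calc c2 * (e3 + (e3 + e3)) = c2 * e3 + (c2 * e3 + c2 * e3) := by ring
        _ ≤ u + (u + u) := add_le_add hcu (add_le_add hcu hcu)
      · calc c2 * ((e3 + e3) + e3) = (c2 * e3 + c2 * e3) + c2 * e3 := by ring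
        _ ≤ (u + u) + u := add_le_add (add_le_add hcu hcu) hcu
  _ = 10 * u := by ring
  _ ≤ 16 * u := mul_le_mul_left (by norm_num) u
  _ = 16 * (ε / 16) := by rw [hu]
  _ ≤ ε := ENNReal.mul_div_le
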